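/- Let D be a natural number and let X' and Z' be Hermitian D×D complex matrices satisfying X'² = Z'² = 1 and the anticommutation relation X'·Z' + Z'·X' = 0. Then there exists d with D = 2*d and a unitary D×D complex matrix U such that, after reindexing Fin D by Fin 2 × Fin d, U·X'·U⁻¹ equals the Kronecker product X ⊗ₖ (1 : Matrix (Fin d) (Fin d) ℂ) and U·Z'·U⁻¹ equals Z ⊗ₖ (1 : Matrix (Fin d) (Fin d) ℂ). -/

import Mathlib

open Matrix
open scoped Kronecker Matrix InnerProductSpace ComplexConjugate

noncomputable section QubitExtractAux

lemma euclid_inner_eq_sum {D : ℕ} (x y : EuclideanSpace ℂ (Fin D)) :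
    inner (𝕜 := ℂ) x y = ∑ m, conj (x m) * y m := by
  simp [PiLp.inner_apply, RCLike.inner_apply, mul_comm]

lemma euclid_toLin_apply {D : ℕ} (A : Matrix (Fin D) (Fin D) ℂ)
    (y : EuclideanSpace ℂ (Fin D)) (m : Fin D) :
    (Matrix.toEuclideanLin A y) m = ∑ n, A m n * y n := rfl

lemma euclid_toLin_mul {D : ℕ} (A B : Matrix (Fin D) (Fin D) ℂ)
    (v : EuclideanSpace ℂ (Fin D)) :
    Matrix.toEuclideanLin A (Matrix.toEuclideanLin B v) =
      Matrix.toEuclideanLin (A * B) v := by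
  ext m
  simp only [euclid_toLin_apply, Matrix.mul_apply, Finset.sum_mul, Finset.mul_sum]
  rw [Finset.sum_comm]
  exact Finset.sum_congr rfl fun n _ => Finset.sum_congr rfl fun p _ => by ring

lemma euclid_toLin_one {D : ℕ} (v : EuclideanSpace ℂ (Fin D)) :
    Matrix.toEuclideanLin (1 : Matrix (Fin D) (Fin D) ℂ) v = v := by
  ext m
  simp [euclid_toLin_apply, Matrix.one_apply]

lemma sandwich_entry {D : ℕ} (B A : Matrix (Fin D) (Fin D) ℂ) (k l : Fin D)
    (g : Fin D → EuclideanSpace ℂ (Fin D)) (hB : ∀ m j, B m j = g j m) :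
    (Bᴴ * A * B) k l = inner (𝕜 := ℂ) (g k) (Matrix.toEuclideanLin A (g l)) := by
  rw [euclid_inner_eq_sum]
  simp only [euclid_toLin_apply, Matrix.mul_apply, Matrix.conjTranspose_apply, ← hB]
  simp only [Finset.sum_mul, Finset.mul_sum]
  rw [Finset.sum_comm]
  refine Finset.sum_congr rfl fun n _ => Finset.sum_congr rfl fun m _ => ?_
  simp only [RCLike.star_def]
  ring

end QubitExtractAux

theorem five_qubit_qubit_extraction (D : ℕ) (X' Z' : Matrix (Fin D) (Fin D) ℂ)
    (hXherm : X'.IsHermitian) (hZherm : Z'.IsHermitian)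
    (hX2 : X' * X' = 1) (hZ2 : Z' * Z' = 1)
    (hanti : X' * Z' + Z' * X' = 0) :
    ∃ (d : ℕ) (e : Fin D ≃ Fin 2 × Fin d) (U : Matrix (Fin D) (Fin D) ℂ),
      D = 2 * d ∧
      U ∈ Matrix.unitaryGroup (Fin D) ℂ ∧
      Matrix.reindex e e (U * X' * U⁻¹) =
        (!![0, 1; 1, 0] : Matrix (Fin 2) (Fin 2) ℂ) ⊗ₖ (1 : Matrix (Fin d) (Fin d) ℂ) ∧
      Matrix.reindex e e (U * Z' * U⁻¹) =
        (!![1, 0; 0, -1] : Matrix (Fin 2) (Fin 2) ℂ) ⊗ₖ (1 : Matrix (Fin d) (Fin d) ℂ) := by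
  classical
  set V := EuclideanSpace ℂ (Fin D) with hV
  set TX : V →ₗ[ℂ] V := Matrix.toEuclideanLin X' with hTXdef
  set TZ : V →ₗ[ℂ] V := Matrix.toEuclideanLin Z' with hTZdef
  have hTX2 : ∀ v : V, TX (TX v) = v := fun v => by
    rw [hTXdef, euclid_toLin_mul, hX2, euclid_toLin_one]
  have hTZ2 : ∀ v : V, TZ (TZ v) = v := fun v => by
    rw [hTZdef, euclid_toLin_mul, hZ2, euclid_toLin_one]
  have hTanti : ∀ v : V, TX (TZ v) = -TZ (TX v) := by
    intro v
    have h1 : Matrix.toEuclideanLin (X' * Z') v + Matrix.toEuclideanLin (Z' * X') v = 0 := by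
      rw [← LinearMap.add_apply, ← map_add, hanti, map_zero, LinearMap.zero_apply]
    rw [hTXdef, hTZdef, euclid_toLin_mul, euclid_toLin_mul]
    exact eq_neg_of_add_eq_zero_left h1
  have hsymX : ∀ v w : V, inner (𝕜 := ℂ) (TX v) w = inner (𝕜 := ℂ) v (TX w) :=
    Matrix.isHermitian_iff_isSymmetric.mp hXherm
  have hsymZ : ∀ v w : V, inner (𝕜 := ℂ) (TZ v) w = inner (𝕜 := ℂ) v (TZ w) :=
    Matrix.isHermitian_iff_isSymmetric.mp hZherm
  -- eigenspaces
  set W : Submodule ℂ V := LinearMap.ker (TZ - LinearMap.id) with hWdef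
  set W' : Submodule ℂ V := LinearMap.ker (TZ + LinearMap.id) with hW'def
  have hmemW : ∀ v : V, v ∈ W ↔ TZ v = v := by
    intro v
    rw [hWdef, LinearMap.mem_ker, LinearMap.sub_apply, LinearMap.id_apply, sub_eq_zero]
  have hmemW' : ∀ v : V, v ∈ W' ↔ TZ v = -v := by
    intro v
    rw [hW'def, LinearMap.mem_ker, LinearMap.add_apply, LinearMap.id_apply, add_eq_zero_iff_eq_neg]
  have hcompl : IsCompl W W' := by
    constructor
    · rw [disjoint_iff, eq_bot_iff]
      rintro v ⟨hv1, hv2⟩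
      rw [SetLike.mem_coe, hmemW] at hv1
      rw [SetLike.mem_coe, hmemW'] at hv2
      have hvv : v = -v := hv1.symm.trans hv2
      have h2 : (2 : ℂ) • v = 0 := by
        rw [two_smul]
        nth_rewrite 1 [hvv]
        exact neg_add_cancel v
      have := (smul_eq_zero.mp h2).resolve_left (by norm_num)
      simp [this]
    · rw [codisjoint_iff, eq_top_iff]
      intro v _
      refine Submodule.mem_sup.mpr ⟨(2⁻¹ : ℂ) • (v + TZ v), ?_, (2⁻¹ : ℂ) • (v - TZ v), ?_, ?_⟩
      · rw [hmemW, _root_.map_smul, map_add, hTZ2, add_comm]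
      · rw [hmemW', _root_.map_smul, map_sub, hTZ2, ← smul_neg, neg_sub]
      · rw [← smul_add]
        have : v + TZ v + (v - TZ v) = (2 : ℂ) • v := by rw [two_smul]; abel
        rw [this, smul_smul]
        norm_num
  -- X' maps W to W' and back
  have hXW : ∀ v : V, v ∈ W → TX v ∈ W' := by
    intro v hv
    rw [hmemW] at hv
    rw [hmemW']
    have h := hTanti v
    rw [hv] at h
    exact neg_eq_iff_eq_neg.mp h.symm
  have hXW' : ∀ v : V, v ∈ W' → TX v ∈ W := by
    intro v hv
    rw [hmemW'] at hv
    rw [hmemW]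
    have h := hTanti v
    rw [hv, map_neg] at h
    exact (neg_inj.mp h).symm
  have hrank : Module.finrank ℂ W' = Module.finrank ℂ W := by
    let f : W →ₗ[ℂ] W' := (TX.comp W.subtype).codRestrict W' fun x => hXW x x.2
    let g : W' →ₗ[ℂ] W := (TX.comp W'.subtype).codRestrict W fun x => hXW' x x.2
    have hfg : f.comp g = LinearMap.id :=
      LinearMap.ext fun x => Subtype.ext (hTX2 (x : V))
    have hgf : g.comp f = LinearMap.id :=
      LinearMap.ext fun x => Subtype.ext (hTX2 (x : V))
    exact (LinearEquiv.ofLinear g f hgf hfg).finrank_eq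
  set d := Module.finrank ℂ W with hddef
  have hD : D = 2 * d := by
    have h1 := Submodule.finrank_add_eq_of_isCompl hcompl
    rw [hrank] at h1
    have h2 : Module.finrank ℂ V = D := finrank_euclideanSpace_fin
    omega
  -- orthonormal basis of the +1 eigenspace
  let b : OrthonormalBasis (Fin d) ℂ W := stdOrthonormalBasis ℂ W
  set bb : Fin d → V := fun i => ((b i : W) : V) with hbbdef
  have hbW : ∀ i, bb i ∈ W := fun i => (b i).2
  have hbZ : ∀ i, TZ (bb i) = bb i := fun i => (hmemW _).mp (hbW i)
  have hbXZ : ∀ i, TZ (TX (bb i)) = -TX (bb i) := fun i => (hmemW' _).mp (hXW _ (hbW i))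
  have hb00 : ∀ i j, inner (𝕜 := ℂ) (bb i) (bb j) = if i = j then (1 : ℂ) else 0 := by
    intro i j
    have h := orthonormal_iff_ite.mp b.orthonormal i j
    rwa [Submodule.coe_inner] at h
  have hperp : ∀ v w : V, TZ v = v → TZ w = -w → inner (𝕜 := ℂ) v w = 0 := by
    intro v w hv hw
    have h1 : inner (𝕜 := ℂ) v w = -(inner (𝕜 := ℂ) v w) := by
      conv_lhs => rw [← hv]
      rw [hsymZ, hw, inner_neg_right]
    linear_combination h1 / 2
  have hv01 : ∀ i j, inner (𝕜 := ℂ) (bb i) (TX (bb j)) = 0 :=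
    fun i j => hperp _ _ (hbZ i) (hbXZ j)
  have hv10 : ∀ i j, inner (𝕜 := ℂ) (TX (bb i)) (bb j) = 0 := by
    intro i j
    rw [hsymX]
    exact hv01 i j
  have hv11 : ∀ i j, inner (𝕜 := ℂ) (TX (bb i)) (TX (bb j)) = if i = j then (1 : ℂ) else 0 := by
    intro i j
    rw [hsymX, hTX2]
    exact hb00 i j
  set g : Fin 2 × Fin d → V := fun p => if p.1 = 0 then bb p.2 else TX (bb p.2) with hgdef
  have horth : Orthonormal ℂ g := by
    rw [orthonormal_iff_ite]
    rintro ⟨a, i⟩ ⟨c, j⟩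
    fin_cases a <;> fin_cases c <;>
      simp [hgdef, hb00, hv01, hv10, hv11, Prod.ext_iff]
  have hcard : Fintype.card (Fin 2 × Fin d) = Module.finrank ℂ V := by
    rw [show Module.finrank ℂ V = D from finrank_euclideanSpace_fin, hD]
    simp
  have hsp : ⊤ ≤ Submodule.span ℂ (Set.range g) := by
    refine (Submodule.eq_top_of_finrank_eq ?_).ge
    rw [finrank_span_eq_card horth.linearIndependent, hcard]
  set gON : OrthonormalBasis (Fin 2 × Fin d) ℂ V := OrthonormalBasis.mk horth hsp with hgON
  set e : Fin D ≃ Fin 2 × Fin d := (finCongr hD).trans finProdFinEquiv.symm with hedef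
  set g' : OrthonormalBasis (Fin D) ℂ V := gON.reindex e.symm with hg'def
  have hg' : ∀ k, g' k = g (e k) := by
    intro k
    rw [hg'def, OrthonormalBasis.reindex_apply, Equiv.symm_symm, hgON, OrthonormalBasis.coe_mk]
  set std : OrthonormalBasis (Fin D) ℂ V := EuclideanSpace.basisFun (Fin D) ℂ with hstd
  set B : Matrix (Fin D) (Fin D) ℂ := std.toBasis.toMatrix g'.toBasis with hBdef
  have hBe : ∀ m j, B m j = g' j m := by
    intro m j
    rw [hBdef, Module.Basis.toMatrix_apply, OrthonormalBasis.coe_toBasis,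
      OrthonormalBasis.coe_toBasis_repr_apply, hstd, EuclideanSpace.basisFun_repr]
  have hBe' : ∀ m j, B m j = g (e j) m := by
    intro m j; rw [hBe, hg']
  have hBU : B ∈ Matrix.unitaryGroup (Fin D) ℂ :=
    std.toMatrix_orthonormalBasis_mem_unitary g'
  have hUmem : Bᴴ ∈ Matrix.unitaryGroup (Fin D) ℂ := by
    rw [← Matrix.star_eq_conjTranspose]
    exact Unitary.star_mem hBU
  have hUinv : (Bᴴ)⁻¹ = B := by
    apply Matrix.inv_eq_left_inv
    have h := Matrix.mem_unitaryGroup_iff.mp hBU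
    rwa [Matrix.star_eq_conjTranspose] at h
  refine ⟨d, e, Bᴴ, hD, hUmem, ?_, ?_⟩
  · rw [hUinv]
    ext ⟨a, i⟩ ⟨c, j⟩
    rw [Matrix.reindex_apply, Matrix.submatrix_apply,
      sandwich_entry B X' _ _ (fun k => g (e k)) hBe',
      Equiv.apply_symm_apply, Equiv.apply_symm_apply, Matrix.kroneckerMap_apply]
    rw [← hTXdef]
    fin_cases a <;> fin_cases c <;>
      simp [hgdef, hv01, hv10, hv11, hb00, hTX2, Matrix.one_apply]
  · rw [hUinv]
    ext ⟨a, i⟩ ⟨c, j⟩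
    rw [Matrix.reindex_apply, Matrix.submatrix_apply,
      sandwich_entry B Z' _ _ (fun k => g (e k)) hBe',
      Equiv.apply_symm_apply, Equiv.apply_symm_apply, Matrix.kroneckerMap_apply]
    rw [← hTZdef]
    fin_cases a <;> fin_cases c <;>
      simp [hgdef, hbZ, hbXZ, hv01, hv10, hv11, hb00, Matrix.one_apply] <;>
        split_ifs <;> simp
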